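/- arXiv:1309.3445 — 4 statements merged into one kernel-verified Lean document; each statement's English description precedes it below -/
import Mathlib

section
/- (Monotonicity, Lemma 3.1) Let N be an abelian network with total alphabet A and total state space Q. For all words w, w' ∈ A^* and all q ∈ Q, if |w| ≤ |w'| coordinatewise in ℕ^A, then N(w,q) ≤ N(w',q) coordinatewise in ℕ^A. -/
/-- The letter-count vector `|w| ∈ ℕ^A` of a word `w ∈ A^*`. -/
def lc {A : Type*} [DecidableEq A] (w : List A) : A → ℕ := fun a => w.count a

/-- An abelian-network *data* structure on a directed graph with vertex set `V`, edge set `E`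
(with source and target maps, allowing loops and multiple edges), total alphabet
`A = ⊔_v A_v` (the letter `a` belongs to the alphabet of the vertex `loc a`), and
state space `Q v` for the processor at vertex `v`.  The abelian hypothesis on the
processors is the separate predicate `AbelianNetwork.IsAbelian`. -/
structure AbelianNetwork (V E A : Type*) (Q : V → Type*) [DecidableEq V] [DecidableEq A] where
  /-- source of an edge -/
  src : E → V
  /-- target of an edge -/
  tgt : E → V
  /-- the vertex whose input alphabet contains the letter `a` -/
  loc : A → V
  /-- the (finitely many) outgoing edges of each vertex -/
  outEdges : V → Finset E
  mem_outEdges : ∀ (e : E) (v : V), e ∈ outEdges v ↔ src e = v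
  /-- single-letter transition function `T_v(a, ·)` of the processor at `v = loc a` -/
  trans : (a : A) → Q (loc a) → Q (loc a)
  /-- message-passing function: the word sent along the edge `e` (with `src e = loc a`)
  when the processor at `loc a` processes the letter `a` in state `q` -/
  msg : (e : E) → (a : A) → Q (loc a) → List A
  /-- letters sent along `e` belong to the alphabet of the target of `e` -/
  msg_tgt : ∀ (e : E) (a : A) (q : Q (loc a)), src e = loc a → ∀ b ∈ msg e a q, loc b = tgt e

namespace AbelianNetwork

variable {V E A : Type*} {Q : V → Type*} [DecidableEq V] [DecidableEq A]
variable (N : AbelianNetwork V E A Q)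

/-- The map `t_a : Q → Q` updating the `loc a` coordinate by `T_{loc a}(a, ·)` and
fixing all other coordinates. -/
def tact (a : A) (q : ∀ v, Q v) : ∀ v, Q v :=
  Function.update q (N.loc a) (N.trans a (q (N.loc a)))

/-- `t_w = t_{w_r} ∘ ⋯ ∘ t_{w_1}` for a word `w = w_1 ⋯ w_r`. -/
def tword (w : List A) (q : ∀ v, Q v) : ∀ v, Q v :=
  w.foldl (fun q a => N.tact a q) q

/-- The word sent along the edge `e` when the letters of `w` are processed in order,
starting from the global state `q`.  (Extends the message-passing functions to words.) -/
def msgword (e : E) : List A → (∀ v, Q v) → List A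
  | [], _ => []
  | a :: w, q =>
      (if N.src e = N.loc a then N.msg e a (q (N.loc a)) else []) ++ msgword e w (N.tact a q)

/-- `N(a, q_{loc a}) ∈ ℕ^A`: the vector counting the letters produced when the processor at
`loc a` processes the letter `a`, summed over the outgoing edges of `loc a`. -/
def Nletter (a : A) (q : ∀ v, Q v) : A → ℕ := fun b =>
  ∑ e ∈ N.outEdges (N.loc a), (N.msg e a (q (N.loc a))).count b

/-- `N(w, q) = ∑_i N(w_i, q^{i-1}_{v(i)})` for a word `w = w_1 ⋯ w_r`. -/
def Nword : List A → (∀ v, Q v) → A → ℕ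
  | [], _ => fun _ => 0
  | a :: w, q => fun b => N.Nletter a q b + Nword w (N.tact a q) b

/-- The network is *abelian*: permuting a word input to a single processor does not change
the resulting state and changes each output word only by permuting its letters. -/
def IsAbelian : Prop :=
  ∀ (v : V) (w w' : List A), (∀ a ∈ w, N.loc a = v) → (∀ a ∈ w', N.loc a = v) →
    (w : Multiset A) = (w' : Multiset A) →
    ∀ q : ∀ u, Q u,
      N.tword w q = N.tword w' q ∧
      ∀ e : E, ((N.msgword e w q : Multiset A) = (N.msgword e w' q : Multiset A))

/-- The state transition `π_a(x.q) = (x - 1_a + N(a, q_{loc a})).t_a(q)` of the whole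
network, viewed as a single automaton with states `x.q ∈ ℤ^A × Q`. -/
def piLetter (a : A) (s : (A → ℤ) × (∀ v, Q v)) : (A → ℤ) × (∀ v, Q v) :=
  (fun b => s.1 b - (if b = a then 1 else 0) + (N.Nletter a s.2 b : ℤ), N.tact a s.2)

/-- `π_w = π_{w_r} ∘ ⋯ ∘ π_{w_1}`. -/
def piWord (w : List A) (s : (A → ℤ) × (∀ v, Q v)) : (A → ℤ) × (∀ v, Q v) :=
  w.foldl (fun s a => N.piLetter a s) s

/-- The word `w` is a *legal execution* from `x.q`: each letter is a legal move
(`x_a ≥ 1`) from the state obtained by executing the previous letters. -/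
def Legal : List A → ((A → ℤ) × (∀ v, Q v)) → Prop
  | [], _ => True
  | a :: w, s => 1 ≤ s.1 a ∧ Legal w (N.piLetter a s)

/-- The word `w` is a *complete execution* from `x.q`: after executing `w`,
no letters remain to be processed. -/
def Complete (w : List A) (s : (A → ℤ) × (∀ v, Q v)) : Prop :=
  ∀ a : A, (N.piWord w s).1 a ≤ 0

/-- A canonical word with letter-count vector `u ∈ ℕ^A`. -/
noncomputable def vecWord [Fintype A] (u : A → ℕ) : List A :=
  (Finset.univ : Finset A).toList.flatMap fun a => List.replicate (u a) a

/-- `N(u, q)` for a vector `u ∈ ℕ^A`, defined as `N(w, q)` for a word `w` with `|w| = u`. -/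
noncomputable def Nvec [Fintype A] (u : A → ℕ) (q : ∀ v, Q v) : A → ℕ := N.Nword (vecWord u) q

lemma tword_nil (q : ∀ v, Q v) : N.tword [] q = q := rfl

lemma tword_cons (a : A) (w : List A) (q : ∀ v, Q v) :
    N.tword (a :: w) q = N.tword w (N.tact a q) := rfl

lemma Nword_cons (a : A) (w : List A) (q : ∀ v, Q v) (b : A) :
    N.Nword (a :: w) q b = N.Nletter a q b + N.Nword w (N.tact a q) b := rfl

lemma tword_append (x y : List A) (q : ∀ v, Q v) :
    N.tword (x ++ y) q = N.tword y (N.tword x q) :=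
  List.foldl_append ..

lemma Nword_append (x y : List A) (q : ∀ v, Q v) (b : A) :
    N.Nword (x ++ y) q b = N.Nword x q b + N.Nword y (N.tword x q) b := by
  induction x generalizing q with
  | nil => simp [Nword, tword_nil]
  | cons a x ih =>
    simp only [List.cons_append, Nword_cons, tword_cons, ih, add_assoc]

lemma tact_apply_ne (a : A) (q : ∀ v, Q v) {v : V} (h : v ≠ N.loc a) :
    N.tact a q v = q v := Function.update_of_ne h _ _

lemma Nletter_of_eq (a : A) {q q' : ∀ v, Q v} (h : q (N.loc a) = q' (N.loc a)) :
    N.Nletter a q = N.Nletter a q' := by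
  unfold Nletter; rw [h]

/-- For a word all of whose letters belong to the processor at `v`, `N(w,q)` is the
total letter count of the words sent along the outgoing edges of `v`. -/
lemma Nword_eq_sum (v : V) (w : List A) (hw : ∀ a ∈ w, N.loc a = v)
    (q : ∀ u, Q u) (b : A) :
    N.Nword w q b = ∑ e ∈ N.outEdges v, (N.msgword e w q).count b := by
  induction w generalizing q with
  | nil => simp [Nword, msgword]
  | cons a w ih =>
    have ha : N.loc a = v := hw a List.mem_cons_self
    rw [Nword_cons, ih (fun x hx => hw x (List.mem_cons_of_mem a hx))]
    have : N.Nletter a q b = ∑ e ∈ N.outEdges v, (N.msg e a (q (N.loc a))).count b := by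
      unfold Nletter
      exact Finset.sum_congr (congrArg N.outEdges ha) fun _ _ => rfl
    rw [this, ← Finset.sum_add_distrib]
    refine Finset.sum_congr rfl fun e he => ?_
    have hsrc : N.src e = N.loc a := by rw [(N.mem_outEdges e v).mp he, ha]
    simp [msgword, hsrc]

/-- The two-letter exchange lemma. -/
lemma swap_lemma (hN : N.IsAbelian) (a b : A) (q : ∀ v, Q v) :
    N.tact b (N.tact a q) = N.tact a (N.tact b q) ∧
    ∀ c, N.Nletter a q c + N.Nletter b (N.tact a q) c
        = N.Nletter b q c + N.Nletter a (N.tact b q) c := by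
  by_cases hloc : N.loc a = N.loc b
  · have hab : ∀ x ∈ [a, b], N.loc x = N.loc a := by
      intro x hx
      rcases List.mem_cons.mp hx with h | h
      · rw [h]
      · rw [List.mem_singleton.mp h, hloc]
    have hba : ∀ x ∈ [b, a], N.loc x = N.loc a := by
      intro x hx
      rcases List.mem_cons.mp hx with h | h
      · rw [h, hloc]
      · rw [List.mem_singleton.mp h]
    have hmul : (([a, b] : List A) : Multiset A) = (([b, a] : List A) : Multiset A) :=
      Multiset.coe_eq_coe.mpr (List.Perm.swap b a [])
    obtain ⟨ht, hm⟩ := hN (N.loc a) [a, b] [b, a] hab hba hmul q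
    refine ⟨ht, fun c => ?_⟩
    have h1 := N.Nword_eq_sum (N.loc a) [a, b] hab q c
    have h2 := N.Nword_eq_sum (N.loc a) [b, a] hba q c
    have hc : ∀ e ∈ N.outEdges (N.loc a),
        (N.msgword e [a, b] q).count c = (N.msgword e [b, a] q).count c := by
      intro e _
      exact (Multiset.coe_eq_coe.mp (hm e)).count_eq c
    have : N.Nword [a, b] q c = N.Nword [b, a] q c := by
      rw [h1, h2]; exact Finset.sum_congr rfl hc
    simpa [Nword_cons, Nword] using this
  · constructor
    · unfold tact
      rw [Function.update_of_ne (Ne.symm hloc), Function.update_of_ne hloc,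
        Function.update_comm hloc]
    · intro c
      have h1 : N.Nletter b (N.tact a q) = N.Nletter b q :=
        N.Nletter_of_eq b (N.tact_apply_ne a q (fun h => hloc h.symm))
      have h2 : N.Nletter a (N.tact b q) = N.Nletter a q :=
        N.Nletter_of_eq a (N.tact_apply_ne b q hloc)
      rw [h1, h2, add_comm]

/-- Permutation invariance of `tword` and `Nword`. -/
lemma perm_invariance (hN : N.IsAbelian) {w w' : List A} (hp : w.Perm w') :
    ∀ q : ∀ v, Q v, N.tword w q = N.tword w' q ∧ ∀ b, N.Nword w q b = N.Nword w' q b := by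
  induction hp with
  | nil => intro q; exact ⟨rfl, fun _ => rfl⟩
  | cons a h ih =>
    intro q
    obtain ⟨ht, hn⟩ := ih (N.tact a q)
    exact ⟨by rw [tword_cons, tword_cons, ht],
      fun b => by rw [Nword_cons, Nword_cons, hn b]⟩
  | swap x y l =>
    intro q
    obtain ⟨ht, hn⟩ := N.swap_lemma hN y x q
    constructor
    · rw [tword_cons, tword_cons, tword_cons, tword_cons, ht]
    · intro b
      rw [Nword_cons, Nword_cons, Nword_cons, Nword_cons, ht, ← add_assoc, ← add_assoc,
        hn b]
  | trans h1 h2 ih1 ih2 =>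
    intro q
    obtain ⟨ht1, hn1⟩ := ih1 q
    obtain ⟨ht2, hn2⟩ := ih2 q
    exact ⟨ht1.trans ht2, fun b => (hn1 b).trans (hn2 b)⟩

end AbelianNetwork

/-- **Monotonicity (Lemma 3.1).** In an abelian network, if `|w| ≤ |w'|` coordinatewise in
`ℕ^A`, then `N(w,q) ≤ N(w',q)` coordinatewise in `ℕ^A`. -/
theorem AbelianNetwork.monotonicity {V E A : Type*} {Q : V → Type*}
    [DecidableEq V] [DecidableEq A] (N : AbelianNetwork V E A Q) (hN : N.IsAbelian)
    (w w' : List A) (q : ∀ v, Q v) (h : lc w ≤ lc w') :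
    N.Nword w q ≤ N.Nword w' q := by
  have hle : (w : Multiset A) ≤ (w' : Multiset A) := by
    rw [Multiset.le_iff_count]
    intro a
    simpa [Multiset.coe_count, lc] using h a
  obtain ⟨t, ht⟩ := Multiset.le_iff_exists_add.mp hle
  have hperm : (w ++ t.toList).Perm w' := by
    apply Multiset.coe_eq_coe.mp
    rw [← Multiset.coe_add, Multiset.coe_toList, ht]
  intro b
  rw [← (N.perm_invariance hN hperm q).2 b, N.Nword_append]
  exact Nat.le_add_right _ _
end

section
/- (Lemma 3.2) Let N be an abelian network with total alphabet A. For all words w, w' ∈ A^*, if |w| = |w'| in ℕ^A, then the state transitions agree: π_w = π_{w'} as maps ℤ^A × Q → ℤ^A × Q. -/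
theorem AbelianNetwork.piLetter_comm {V E A : Type*} {Q : V → Type*}
    [DecidableEq V] [DecidableEq A] (N : AbelianNetwork V E A Q) (hN : N.IsAbelian)
    (a b : A) (s : (A → ℤ) × (∀ v, Q v)) :
    N.piLetter b (N.piLetter a s) = N.piLetter a (N.piLetter b s) := by
  obtain ⟨x, q⟩ := s
  have key : (N.tact b (N.tact a q) = N.tact a (N.tact b q)) ∧
      ∀ c, N.Nletter a q c + N.Nletter b (N.tact a q) c
        = N.Nletter b q c + N.Nletter a (N.tact b q) c := by
    by_cases hv : N.loc b = N.loc a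
    · have H := hN (N.loc a) [a, b] [b, a] (by simp [hv]) (by simp [hv])
        (Multiset.coe_eq_coe.2 (List.Perm.swap b a [])) q
      have hE : N.outEdges (N.loc b) = N.outEdges (N.loc a) := by rw [hv]
      refine ⟨H.1, fun c => ?_⟩
      have key1 : ∀ e ∈ N.outEdges (N.loc a),
          (N.msgword e [a, b] q).count c
            = (N.msg e a (q (N.loc a))).count c
              + (N.msg e b ((N.tact a q) (N.loc b))).count c := by
        intro e he
        have hse : N.src e = N.loc a := (N.mem_outEdges e _).1 he
        have hse' : N.src e = N.loc b := hse.trans hv.symm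
        simp [AbelianNetwork.msgword, if_pos hse, if_pos hse', List.count_append]
      have key2 : ∀ e ∈ N.outEdges (N.loc a),
          (N.msgword e [b, a] q).count c
            = (N.msg e b (q (N.loc b))).count c
              + (N.msg e a ((N.tact b q) (N.loc a))).count c := by
        intro e he
        have hse : N.src e = N.loc a := (N.mem_outEdges e _).1 he
        have hse' : N.src e = N.loc b := hse.trans hv.symm
        simp [AbelianNetwork.msgword, if_pos hse, if_pos hse', List.count_append]
      have hcnt : ∀ e, (N.msgword e [a, b] q).count c = (N.msgword e [b, a] q).count c := by
        intro e
        have := congrArg (Multiset.count c) (H.2 e)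
        simpa using this
      calc N.Nletter a q c + N.Nletter b (N.tact a q) c
          = ∑ e ∈ N.outEdges (N.loc a), (N.msgword e [a, b] q).count c := by
            rw [AbelianNetwork.Nletter, AbelianNetwork.Nletter, hE, ← Finset.sum_add_distrib]
            exact (Finset.sum_congr rfl key1).symm
        _ = ∑ e ∈ N.outEdges (N.loc a), (N.msgword e [b, a] q).count c :=
            Finset.sum_congr rfl fun e _ => hcnt e
        _ = N.Nletter b q c + N.Nletter a (N.tact b q) c := by
            rw [AbelianNetwork.Nletter, AbelianNetwork.Nletter, hE, ← Finset.sum_add_distrib]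
            exact Finset.sum_congr rfl key2
    · have hv' : N.loc a ≠ N.loc b := fun h => hv h.symm
      have qa : (N.tact b q) (N.loc a) = q (N.loc a) := by
        simp [AbelianNetwork.tact, Function.update_of_ne hv']
      have qb : (N.tact a q) (N.loc b) = q (N.loc b) := by
        simp [AbelianNetwork.tact, Function.update_of_ne hv]
      constructor
      · simp only [AbelianNetwork.tact, Function.update_of_ne hv, Function.update_of_ne hv']
        exact Function.update_comm hv' _ _ q
      · intro c
        have h1 : N.Nletter b (N.tact a q) c = N.Nletter b q c := by
          rw [AbelianNetwork.Nletter, AbelianNetwork.Nletter, qb]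
        have h2 : N.Nletter a (N.tact b q) c = N.Nletter a q c := by
          rw [AbelianNetwork.Nletter, AbelianNetwork.Nletter, qa]
        rw [h1, h2]
        omega
  obtain ⟨ht, hsum⟩ := key
  unfold AbelianNetwork.piLetter
  simp only [ht]
  congr 1
  funext c
  have := hsum c
  split_ifs <;> omega

/-- **Lemma 3.2.** In an abelian network, if `|w| = |w'|` in `ℕ^A`, then the state
transitions agree: `π_w = π_{w'}` as maps `ℤ^A × Q → ℤ^A × Q`. -/
theorem AbelianNetwork.piWord_congr {V E A : Type*} {Q : V → Type*}
    [DecidableEq V] [DecidableEq A] (N : AbelianNetwork V E A Q) (hN : N.IsAbelian)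
    (w w' : List A) (h : lc w = lc w') :
    N.piWord w = N.piWord w' := by
  have hp : w.Perm w' := List.perm_iff_count.2 fun c => congrFun h c
  clear h
  induction hp with
  | nil => rfl
  | cons a _ ih =>
      funext s
      exact congrFun ih (N.piLetter a s)
  | swap a b l =>
      funext s
      show N.piWord l (N.piLetter a (N.piLetter b s)) = N.piWord l (N.piLetter b (N.piLetter a s))
      rw [N.piLetter_comm hN]
  | trans _ _ ih1 ih2 => exact ih1.trans ih2
end

section
/- (Least Action Principle, Lemma 3.3) Let N be an abelian network with total alphabet A, and fix an initial state x.q with x ∈ ℤ^A, q ∈ Q. If the word w = w_1⋯w_r is a legal execution for x.q and the word w' = w'_1⋯w'_s is a complete execution for x.q, then |w| ≤ |w'| coordinatewise in ℕ^A, and in particular r ≤ s. -/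
namespace AbelianNetwork

variable {V E A : Type*} {Q : V → Type*} [DecidableEq V] [DecidableEq A]
variable (N : AbelianNetwork V E A Q)

lemma tact_apply_self (a : A) (q : ∀ v, Q v) :
    N.tact a q (N.loc a) = N.trans a (q (N.loc a)) :=
  Function.update_self _ _ _

/-- The key commutation: `π_a` and `π_b` commute for any two letters. -/
lemma piLetter_comm_s3 (hN : N.IsAbelian) (a b : A) (s : (A → ℤ) × (∀ v, Q v)) :
    N.piLetter b (N.piLetter a s) = N.piLetter a (N.piLetter b s) := by
  obtain ⟨x, q⟩ := s
  by_cases hab : N.loc b = N.loc a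
  · -- same processor: use the abelian hypothesis on the words [a,b] and [b,a]
    have h1 : ∀ c ∈ [a, b], N.loc c = N.loc a := by
      intro c hc
      simp only [List.mem_cons, List.not_mem_nil, or_false] at hc
      rcases hc with rfl | rfl
      · rfl
      · exact hab
    have h2 : ∀ c ∈ [b, a], N.loc c = N.loc a := by
      intro c hc
      simp only [List.mem_cons, List.not_mem_nil, or_false] at hc
      rcases hc with rfl | rfl
      · exact hab
      · rfl
    have h3 : (([a, b] : List A) : Multiset A) = (([b, a] : List A) : Multiset A) :=
      Quot.sound (List.Perm.swap b a [])
    obtain ⟨hstate, hmsg⟩ := hN (N.loc a) [a, b] [b, a] h1 h2 h3 q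
    have hstate' : N.tact b (N.tact a q) = N.tact a (N.tact b q) := by
      simpa [tword] using hstate
    have key : ∀ c : A, N.Nletter a q c + N.Nletter b (N.tact a q) c
        = N.Nletter b q c + N.Nletter a (N.tact b q) c := by
      intro c
      have hcount : ∀ e ∈ N.outEdges (N.loc a),
          (N.msg e a (q (N.loc a))).count c + (N.msg e b ((N.tact a q) (N.loc b))).count c
          = (N.msg e b (q (N.loc b))).count c + (N.msg e a ((N.tact b q) (N.loc a))).count c := by
        intro e he
        have hsa : N.src e = N.loc a := (N.mem_outEdges e _).mp he
        have hsb : N.src e = N.loc b := by rw [hab]; exact hsa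
        have := hmsg e
        have hc := congrArg (Multiset.count c) this
        simpa [msgword, hsa, hsb, hab, List.count_append] using hc
      simp only [Nletter, hab]
      rw [← Finset.sum_add_distrib, ← Finset.sum_add_distrib]
      exact Finset.sum_congr rfl hcount
    simp only [piLetter]
    refine Prod.ext ?_ (by simpa using hstate')
    funext c
    have hk := key c
    have hk' : (N.Nletter a q c : ℤ) + N.Nletter b (N.tact a q) c
        = N.Nletter b q c + N.Nletter a (N.tact b q) c := by exact_mod_cast hk
    simp only
    ring_nf
    linarith [hk']
  · -- different processors
    have hqa : (N.tact b q) (N.loc a) = q (N.loc a) :=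
      N.tact_apply_ne b q (fun h => hab h.symm)
    have hqb : (N.tact a q) (N.loc b) = q (N.loc b) :=
      N.tact_apply_ne a q hab
    have hstate' : N.tact b (N.tact a q) = N.tact a (N.tact b q) := by
      funext v
      by_cases hva : v = N.loc a
      · subst hva
        rw [N.tact_apply_ne b _ (fun h => hab h.symm), N.tact_apply_self,
          N.tact_apply_self, hqa]
      · by_cases hvb : v = N.loc b
        · subst hvb
          rw [N.tact_apply_self, hqb, N.tact_apply_ne a _ hva, N.tact_apply_self]
        · rw [N.tact_apply_ne b _ hvb, N.tact_apply_ne a _ hva,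
            N.tact_apply_ne a _ hva, N.tact_apply_ne b _ hvb]
    have hNa : N.Nletter a (N.tact b q) = N.Nletter a q := by
      funext c; simp only [Nletter, hqa]
    have hNb : N.Nletter b (N.tact a q) = N.Nletter b q := by
      funext c; simp only [Nletter, hqb]
    simp only [piLetter]
    refine Prod.ext ?_ (by simpa using hstate')
    funext c
    simp only [hNa, hNb]
    ring

lemma piWord_cons (a : A) (u : List A) (s : (A → ℤ) × (∀ v, Q v)) :
    N.piWord (a :: u) s = N.piWord u (N.piLetter a s) := rfl

lemma piWord_perm (hN : N.IsAbelian) {u u' : List A} (h : u.Perm u')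
    (s : (A → ℤ) × (∀ v, Q v)) : N.piWord u s = N.piWord u' s :=
  List.Perm.foldl_eq' h (fun c _ d _ z => N.piLetter_comm_s3 hN c d z) s

lemma piWord_fst_ge (u : List A) (s : (A → ℤ) × (∀ v, Q v)) (b : A) :
    s.1 b - u.count b ≤ (N.piWord u s).1 b := by
  induction u generalizing s with
  | nil => simp [piWord]
  | cons c u ih =>
    rw [N.piWord_cons]
    refine le_trans ?_ (ih (N.piLetter c s))
    have hnn : (0 : ℤ) ≤ (N.Nletter c s.2 b : ℤ) := Int.ofNat_nonneg _
    simp only [piLetter, List.count_cons, beq_iff_eq]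
    by_cases h : b = c
    · subst h
      simp only [if_pos rfl]
      push_cast
      linarith
    · rw [if_neg h, if_neg (fun hh => h hh.symm)]
      push_cast
      linarith

lemma least_action_aux (hN : N.IsAbelian) (w : List A) :
    ∀ (w' : List A) (s : (A → ℤ) × (∀ v, Q v)),
      N.Legal w s → N.Complete w' s → lc w ≤ lc w' ∧ w.length ≤ w'.length := by
  induction w with
  | nil => intro w' s _ _; exact ⟨fun b => Nat.zero_le _, Nat.zero_le _⟩
  | cons a w₂ ih =>
    intro w' s hw hw'
    obtain ⟨ha, hw₂⟩ := hw
    have hmem : a ∈ w' := by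
      by_contra hnot
      have h0 : w'.count a = 0 := List.count_eq_zero_of_not_mem hnot
      have := N.piWord_fst_ge w' s a
      rw [h0] at this
      have := hw' a
      omega
    have hperm : w'.Perm (a :: w'.erase a) := List.perm_cons_erase hmem
    have hcomp : N.Complete (w'.erase a) (N.piLetter a s) := by
      intro b
      have := hw' b
      rwa [N.piWord_perm hN hperm, N.piWord_cons] at this
    obtain ⟨hlc, hlen⟩ := ih (w'.erase a) (N.piLetter a s) hw₂ hcomp
    constructor
    · intro b
      have hc : w'.count b = (a :: w'.erase a).count b := hperm.count_eq b
      have := hlc b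
      simp only [lc, List.count_cons] at *
      omega
    · have : w'.length = (w'.erase a).length + 1 := by
        rw [hperm.length_eq]; simp
      simp only [List.length_cons]
      omega

end AbelianNetwork

/-- **Least Action Principle (Lemma 3.3).** If `w` is a legal execution for `x.q` and `w'`
is a complete execution for `x.q`, then `|w| ≤ |w'|` coordinatewise in `ℕ^A`; in
particular `r ≤ s` where `r, s` are the lengths of `w, w'`. -/
theorem AbelianNetwork.least_action {V E A : Type*} {Q : V → Type*}
    [DecidableEq V] [DecidableEq A] (N : AbelianNetwork V E A Q) (hN : N.IsAbelian)
    (x : A → ℤ) (q : ∀ v, Q v) (w w' : List A)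
    (hw : N.Legal w (x, q)) (hw' : N.Complete w' (x, q)) :
    lc w ≤ lc w' ∧ w.length ≤ w'.length := by
  exact N.least_action_aux hN w w' (x, q) hw hw'
end

section
/- (Unique minimizer of the monotone integer program) Let A be a finite set, F : ℕ^A → ℕ^A nondecreasing, and c ∈ ℝ^A a vector with all coordinates strictly positive. If the feasible set S = {u ∈ ℕ^A : F(u) ≤ u} is nonempty, then the problem of minimizing cᵀu over u ∈ S has a unique minimizer, which is independent of c: it is the least element of S (the coordinatewise minimum of all feasible vectors). -/
/-- **Unique minimizer of the monotone integer program.** Let `A` be a finite set,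
`F : ℕ^A → ℕ^A` nondecreasing, and `c ∈ ℝ^A` a vector with all coordinates strictly
positive.  If the feasible set `S = {u ∈ ℕ^A : F(u) ≤ u}` is nonempty, then the problem
of minimizing `cᵀu` over `u ∈ S` has a unique minimizer, which is independent of `c`:
it is the least element of `S`. -/
theorem unique_minimizer {A : Type*} [Fintype A] (F : (A → ℕ) → (A → ℕ))
    (hF : Monotone F) (c : A → ℝ) (hc : ∀ a, 0 < c a)
    (hne : ∃ u : A → ℕ, F u ≤ u) :
    ∃ ustar : A → ℕ,
      (F ustar ≤ ustar ∧
        (∀ u : A → ℕ, F u ≤ u → ∑ a, c a * (ustar a : ℝ) ≤ ∑ a, c a * (u a : ℝ)) ∧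
        (∀ u : A → ℕ, F u ≤ u → ustar ≤ u)) ∧
      ∀ u : A → ℕ,
        (F u ≤ u ∧ ∀ v : A → ℕ, F v ≤ v → ∑ a, c a * (u a : ℝ) ≤ ∑ a, c a * (v a : ℝ)) →
        u = ustar := by
  classical
  set ustar : A → ℕ := fun a => sInf {n | ∃ u : A → ℕ, F u ≤ u ∧ u a = n} with hustar
  have hle : ∀ u : A → ℕ, F u ≤ u → ustar ≤ u := by
    intro u hu a
    exact Nat.sInf_le ⟨u, hu, rfl⟩
  have hfeas : F ustar ≤ ustar := by
    intro a
    obtain ⟨u0, hu0⟩ := hne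
    have hne' : {n | ∃ u : A → ℕ, F u ≤ u ∧ u a = n}.Nonempty := ⟨u0 a, u0, hu0, rfl⟩
    rw [hustar]
    refine le_csInf hne' ?_
    rintro n ⟨u, hu, rfl⟩
    exact le_trans (hF (hle u hu) a) (hu a)
  have hsum : ∀ u v : A → ℕ, u ≤ v →
      ∑ a, c a * (u a : ℝ) ≤ ∑ a, c a * (v a : ℝ) := by
    intro u v huv
    refine Finset.sum_le_sum fun a _ => ?_
    exact mul_le_mul_of_nonneg_left (by exact_mod_cast huv a) (hc a).le
  refine ⟨ustar, ⟨hfeas, fun u hu => hsum _ _ (hle u hu), hle⟩, ?_⟩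
  rintro u ⟨hu, hmin⟩
  have h1 : ustar ≤ u := hle u hu
  have h2 : ∑ a, c a * (u a : ℝ) = ∑ a, c a * (ustar a : ℝ) :=
    le_antisymm (hmin ustar hfeas) (hsum _ _ h1)
  funext a
  by_contra hne'
  have hlt : ustar a < u a := lt_of_le_of_ne (h1 a) (Ne.symm hne')
  have : ∑ a, c a * (ustar a : ℝ) < ∑ a, c a * (u a : ℝ) := by
    refine Finset.sum_lt_sum (fun b _ => mul_le_mul_of_nonneg_left
      (by exact_mod_cast h1 b) (hc b).le) ⟨a, Finset.mem_univ a, ?_⟩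
    exact mul_lt_mul_of_pos_left (by exact_mod_cast hlt) (hc a)
  linarith [h2]
end
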